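/- Assume the setup: k ≥ 1 is an integer, P and T are strings with |P| ≤ |T|, Q is a primitive string with 128k·|Q| ≤ |P|, r ∈ {0,…,|Q|−1}, P̄ := Q^∞[r..r+|P|), T̄ := Q^∞[0..|T|), δ_H(P,P̄) ≤ 2k, and δ_H(T,T̄) ≤ 6k; τ_0 < τ_1 < … < τ_{b−1} are the elements of Mis(T,T̄), with τ_{−1} := −1 and τ_b := |T|, and R_i := {x ∈ ℤ : τ_{i−1} < x ≤ τ_i} for 0 ≤ i ≤ b; E := {τ − π : π ∈ Mis(P,P̄), τ ∈ Mis(T,T̄)}. Then for every set A of nonnegative integers and all integers s, t with 0 ≤ s ≤ t ≤ b satisfying δ_H(P,P̄) + (t − s) > k, it holds that Ext_k(P,T,A ∩ R_s) ∩ R_t ⊆ E + |P|. -/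

import Mathlib

/-- Mismatch positions of two (equal-length) strings:
`Mis(X,Y) = {i : X[i] ≠ Y[i]}`. -/
def mis {α : Type*} [DecidableEq α] [Inhabited α] (X Y : List α) : Finset ℕ :=
  (Finset.range (min X.length Y.length)).filter (fun i => X.getD i default ≠ Y.getD i default)

/-- Hamming distance of two (equal-length) strings: the number of mismatch positions. -/
def hdist {α : Type*} [DecidableEq α] [Inhabited α] (X Y : List α) : ℕ := (mis X Y).card

/-- The fragment `S[x..x+L)`. -/
def frag {α : Type*} (S : List α) (x L : ℕ) : List α := (S.drop x).take L

/-- `Q^∞[a..a+L)`: the string of length `L` whose `i`-th character is `Q[(a+i) mod |Q|]`. -/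
def qinf {α : Type*} [Inhabited α] (Q : List α) (a L : ℕ) : List α :=
  (List.range L).map (fun i => Q.getD ((a + i) % Q.length) default)

/-- A nonempty string is primitive if it is not of the form `Y^h` with `h ≥ 2`. -/
def Primitive {α : Type*} (Q : List α) : Prop :=
  Q ≠ [] ∧ ∀ (Y : List α) (h : ℕ), 2 ≤ h → Q ≠ (List.replicate h Y).flatten

/-- `Occ_k(P,T)`: the set of starting positions of `k`-mismatch occurrences of `P` in `T`. -/
def occSet {α : Type*} [DecidableEq α] [Inhabited α] (k : ℕ) (P T : List α) : Set ℕ :=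
  {x | x + P.length ≤ T.length ∧ hdist P (frag T x P.length) ≤ k}

/-- `Ext_k(P,T,A) = {x + |P| : x ∈ Occ_k(P,T) ∩ A}` (as a set of integers). -/
def extSet {α : Type*} [DecidableEq α] [Inhabited α] (k : ℕ) (P T : List α) (A : Set ℤ) :
    Set ℤ :=
  {y | ∃ x : ℕ, x ∈ occSet k P T ∧ (x : ℤ) ∈ A ∧ y = (x : ℤ) + P.length}

lemma length_qinf {α : Type*} [Inhabited α] (Q : List α) (a L : ℕ) : (qinf Q a L).length = L := by
  simp [qinf]

lemma getD_qinf {α : Type*} [Inhabited α] (Q : List α) (a L i : ℕ) (hi : i < L) (d0 : α) :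
    (qinf Q a L).getD i d0 = Q.getD ((a + i) % Q.length) default := by
  rw [List.getD_eq_getElem _ _ (by simpa [length_qinf] using hi)]
  simp [qinf]

lemma length_frag {α : Type*} (S : List α) (x L : ℕ) (h : x + L ≤ S.length) :
    (frag S x L).length = L := by
  simp [frag]; omega

lemma getD_frag {α : Type*} (S : List α) (x L i : ℕ) (hi : i < L) (hx : x + i < S.length)
    (d0 : α) : (frag S x L).getD i d0 = S.getD (x + i) d0 := by
  rw [List.getD_eq_getElem _ _ (by simp [frag]; omega),
      List.getD_eq_getElem _ _ (by omega)]
  simp [frag]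

lemma mem_mis_iff {α : Type*} [DecidableEq α] [Inhabited α] {X Y : List α} {i : ℕ} :
    i ∈ mis X Y ↔ i < min X.length Y.length ∧ X.getD i default ≠ Y.getD i default := by
  simp [mis]

lemma getD_flatten_replicate' {α : Type*} (h : ℕ) (Y : List α) (d0 : α) :
    ∀ i : ℕ, i < h * Y.length →
      ((List.replicate h Y).flatten).getD i d0 = Y.getD (i % Y.length) d0 := by
  induction h with
  | zero => intro i hi; simp at hi
  | succ n ih =>
    intro i hi
    rw [Nat.succ_mul] at hi
    simp only [List.replicate_succ, List.flatten_cons]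
    by_cases hiY : i < Y.length
    · rw [List.getD_append _ _ _ _ hiY, Nat.mod_eq_of_lt hiY]
    · have hY0 : 0 < Y.length := by
        rcases Nat.eq_zero_or_pos Y.length with h0 | h0
        · rw [h0, Nat.mul_zero] at hi; omega
        · exact h0
      rw [List.getD_append_right _ _ _ _ (by omega), ih _ (by omega)]
      rw [← Nat.mod_eq_sub_mod (by omega)]

lemma lemmaA {α : Type*} [Inhabited α] (Q : List α) (hne : Q ≠ [])
    (hprim : ∀ (Y : List α) (h : ℕ), 2 ≤ h → Q ≠ (List.replicate h Y).flatten)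
    (d : ℕ)
    (hd : ∀ j : ℕ, Q.getD ((j + d) % Q.length) default = Q.getD (j % Q.length) default) :
    d % Q.length = 0 := by
  set q := Q.length with hqdef
  have hq : 0 < q := List.length_pos_iff.mpr hne
  by_contra hne0
  set g := Nat.gcd d q with hgdef
  have hgd : g ∣ d := Nat.gcd_dvd_left d q
  have hgq : g ∣ q := Nat.gcd_dvd_right d q
  have hg0 : 0 < g := Nat.gcd_pos_of_pos_right d hq
  have hglt : g < q := by
    rcases lt_or_eq_of_le (Nat.le_of_dvd hq hgq) with h | h
    · exact h
    · exact absurd (Nat.mod_eq_zero_of_dvd (h ▸ hgd)) hne0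
  set F : ℕ → α := fun j => Q.getD (j % q) default with hFdef
  have hF : ∀ j, F (j + d) = F j := hd
  have hFq : ∀ j, F (j + q) = F j := by
    intro j; simp only [hFdef, Nat.add_mod_right]
  have hFnq : ∀ n j, F (j + n * q) = F j := by
    intro n
    induction n with
    | zero => simp
    | succ m ih => intro j; rw [Nat.succ_mul, ← Nat.add_assoc, hFq, ih]
  obtain ⟨m, hm⟩ : ∃ m, d * m % q = Nat.gcd d q :=
    by obtain ⟨m, -, hm⟩ := Nat.exists_mul_mod_eq_gcd (lt_of_le_of_lt (le_of_eq rfl) hglt); exact ⟨m, hm⟩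
  have hFmd : ∀ n j, F (j + d * n) = F j := by
    intro n
    induction n with
    | zero => simp
    | succ p ih => intro j; rw [Nat.mul_succ, ← Nat.add_assoc, hF, ih]
  have hFg : ∀ j, F (j + g) = F j := by
    intro j
    obtain ⟨c, hdm⟩ : ∃ c, d * m = q * c + g := by
      refine ⟨d * m / q, ?_⟩
      conv_lhs => rw [← Nat.div_add_mod (d * m) q]
      rw [hm]
    have hthis := hFmd m j
    have e : j + d * m = (j + g) + c * q := by rw [hdm]; ring
    rw [e, hFnq] at hthis
    exact hthis
  have hFng : ∀ n j, F (j + n * g) = F j := by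
    intro n
    induction n with
    | zero => simp
    | succ p ih => intro j; rw [Nat.succ_mul, ← Nat.add_assoc, hFg, ih]
  have hper : ∀ i, i < q → Q.getD i default = Q.getD (i % g) default := by
    intro i hi
    have h1 : F i = Q.getD i default := by simp only [hFdef, Nat.mod_eq_of_lt hi]
    have h2 : F (i % g) = Q.getD (i % g) default := by
      simp only [hFdef, Nat.mod_eq_of_lt (lt_trans (Nat.mod_lt _ hg0) hglt)]
    have h3 : F i = F (i % g) := by
      conv_lhs => rw [← Nat.mod_add_div i g]
      rw [Nat.mul_comm]
      exact hFng (i / g) (i % g)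
    rw [← h1, h3, h2]
  set Y := Q.take g with hYdef
  have hYlen : Y.length = g := by simp [hYdef]; omega
  set h := q / g with hhdef
  have hgh : h * g = q := by rw [Nat.mul_comm]; exact Nat.mul_div_cancel' hgq
  have hh2 : 2 ≤ h := by
    rcases Nat.lt_or_ge h 2 with hh | hh
    · exfalso; interval_cases h <;> omega
    · exact hh
  apply hprim Y h hh2
  have hlen : ((List.replicate h Y).flatten).length = q := by
    rw [List.length_flatten, List.map_replicate, List.sum_replicate, smul_eq_mul, hYlen]
    exact hgh
  have hYget : ∀ j, j < g → Y.getD j default = Q.getD j default := by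
    intro j hj
    rw [List.getD_eq_getElem _ _ (by rw [hYlen]; exact hj),
        List.getD_eq_getElem _ _ (by omega)]
    simp [hYdef]
  apply List.ext_getElem (by rw [hlen])
  intro i h1 h2
  rw [← List.getD_eq_getElem _ default h1, ← List.getD_eq_getElem _ default h2]
  rw [getD_flatten_replicate' h Y default i (by rw [hYlen, hgh]; omega), hYlen]
  rw [hYget _ (Nat.mod_lt _ hg0), ← hper i (by omega)]

/-- Second case of the key structural lemma: if `δ_H(P,P̄) + (t - s) > k` then
`Ext_k(P, T, A ∩ R_s) ∩ R_t ⊆ E + |P|`, where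
`E = {τ - π : π ∈ Mis(P,P̄), τ ∈ Mis(T,T̄)}`. -/
theorem stmt8 {α : Type*} [DecidableEq α] [Inhabited α]
    (k : ℕ) (hk : 1 ≤ k) (P T Q : List α) (hPT : P.length ≤ T.length)
    (hQprim : Primitive Q) (hQP : 128 * k * Q.length ≤ P.length)
    (r : ℕ) (hr : r < Q.length)
    (hPper : hdist P (qinf Q r P.length) ≤ 2 * k)
    (hTper : hdist T (qinf Q 0 T.length) ≤ 6 * k)
    (b : ℕ) (τ : ℤ → ℤ)
    (hmono : ∀ i j : ℤ, 0 ≤ i → i < j → j < b → τ i < τ j)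
    (hmem : ∀ i : ℤ, 0 ≤ i → i < b → ∃ m ∈ mis T (qinf Q 0 T.length), (m : ℤ) = τ i)
    (hsurj : ∀ m ∈ mis T (qinf Q 0 T.length), ∃ i : ℤ, 0 ≤ i ∧ i < b ∧ τ i = m)
    (hneg : τ (-1) = -1) (hend : τ b = T.length)
    (A : Set ℤ) (hA : ∀ x ∈ A, 0 ≤ x)
    (s t : ℤ) (hs : 0 ≤ s) (hst : s ≤ t) (htb : t ≤ b)
    (hcase : (k : ℤ) < (hdist P (qinf Q r P.length) : ℤ) + (t - s)) :
    extSet k P T (A ∩ Set.Ioc (τ (s - 1)) (τ s)) ∩ Set.Ioc (τ (t - 1)) (τ t) ⊆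
      (fun z => z + (P.length : ℤ)) ''
        {z : ℤ | ∃ π ∈ mis P (qinf Q r P.length), ∃ τ' ∈ mis T (qinf Q 0 T.length),
          z = (τ' : ℤ) - (π : ℤ)} := by
  have hq : 0 < Q.length := List.length_pos_iff.mpr hQprim.1
  rintro y ⟨⟨x, ⟨hxlen, hxdist⟩, ⟨hxA, hxs⟩, rfl⟩, hyt⟩
  have hfraglen : (frag T x P.length).length = P.length := length_frag T x P.length hxlen
  -- Step 1 : x ≡ r (mod |Q|)
  have hkey : ∀ i : ℕ, (x + i) % Q.length = (r + i) % Q.length := by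
    by_cases hd0 : (x + (Q.length - r)) % Q.length = 0
    · intro i
      have e : x + i + Q.length = (x + (Q.length - r)) + (r + i) := by omega
      calc (x + i) % Q.length = (x + i + Q.length) % Q.length := by rw [Nat.add_mod_right]
        _ = ((x + (Q.length - r)) + (r + i)) % Q.length := by rw [e]
        _ = ((x + (Q.length - r)) % Q.length + (r + i)) % Q.length := by
              rw [Nat.mod_add_mod]
        _ = (r + i) % Q.length := by rw [hd0, Nat.zero_add]
    · exfalso
      set d := (x + (Q.length - r)) % Q.length with hd
      have hdlt : d < Q.length := Nat.mod_lt _ hq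
      have hxd : (x + (Q.length - r)) % Q.length = d % Q.length := by
        rw [← hd, Nat.mod_eq_of_lt hdlt]
      obtain ⟨j0, hj0⟩ :
          ∃ j0 : ℕ, Q.getD ((j0 + d) % Q.length) default ≠ Q.getD (j0 % Q.length) default := by
        by_contra hall
        push_neg at hall
        have := lemmaA Q hQprim.1 hQprim.2 d hall
        rw [Nat.mod_eq_of_lt hdlt] at this
        exact hd0 this
      set e := (j0 + (Q.length - r)) % Q.length with hedef
      have helt : e < Q.length := Nat.mod_lt _ hq
      -- each block-position m*|Q|+e is a mismatch between P̄ and T̄[x..]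
      have hri : ∀ m : ℕ, (r + (m * Q.length + e)) % Q.length = j0 % Q.length := by
        intro m
        rw [show r + (m * Q.length + e) = r + e + m * Q.length by ring,
            Nat.add_mul_mod_self_right, hedef, Nat.add_mod_mod,
            show r + (j0 + (Q.length - r)) = j0 + Q.length by omega,
            Nat.add_mod_right]
      have hxi : ∀ m : ℕ, (x + (m * Q.length + e)) % Q.length = (j0 + d) % Q.length := by
        intro m
        rw [show x + (m * Q.length + e) = x + e + m * Q.length by ring,
            Nat.add_mul_mod_self_right, hedef, Nat.add_mod_mod,
            show x + (j0 + (Q.length - r)) = (x + (Q.length - r)) + j0 by ring,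
            ← Nat.mod_add_mod, hxd, Nat.mod_add_mod, Nat.add_comm d j0]
      have him : ∀ m : ℕ, m < 128 * k → m * Q.length + e < P.length := by
        intro m hm
        have h1 : (m + 1) * Q.length ≤ 128 * k * Q.length :=
          Nat.mul_le_mul_right _ (by omega)
        have h2 : m * Q.length + e < (m + 1) * Q.length := by
          rw [Nat.succ_mul]; omega
        omega
      -- counting
      set M1 := mis P (qinf Q r P.length) with hM1def
      set M3 := mis P (frag T x P.length) with hM3def
      set M2 := Finset.image (fun n => n - x) (mis T (qinf Q 0 T.length)) with hM2def
      have hsub : Finset.image (fun m => m * Q.length + e) (Finset.range (128 * k)) ⊆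
          M1 ∪ M2 ∪ M3 := by
        intro i hi
        rw [Finset.mem_image] at hi
        obtain ⟨m, hm, rfl⟩ := hi
        rw [Finset.mem_range] at hm
        have hiP : m * Q.length + e < P.length := him m hm
        set i := m * Q.length + e with hidef
        have hxiT : x + i < T.length := by omega
        by_cases h1 : P.getD i default = (qinf Q r P.length).getD i default
        · by_cases h2 : P.getD i default = (frag T x P.length).getD i default
          · -- then x + i is a mismatch of T vs T̄
            have hPb : (qinf Q r P.length).getD i default
                = Q.getD (j0 % Q.length) default := by
              rw [getD_qinf Q r P.length i hiP, hri m]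
            have hTb : (qinf Q 0 T.length).getD (x + i) default
                = Q.getD ((j0 + d) % Q.length) default := by
              rw [getD_qinf Q 0 T.length (x + i) (by omega), Nat.zero_add, hxi m]
            have hTx : T.getD (x + i) default = P.getD i default := by
              rw [h2, getD_frag T x P.length i hiP hxiT]
            have hmemT : x + i ∈ mis T (qinf Q 0 T.length) := by
              rw [mem_mis_iff]
              refine ⟨by rw [length_qinf]; omega, ?_⟩
              rw [hTx, hTb, h1, hPb]
              exact (Ne.symm hj0)
            apply Finset.mem_union_left
            apply Finset.mem_union_right
            rw [hM2def, Finset.mem_image]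
            exact ⟨x + i, hmemT, by omega⟩
          · apply Finset.mem_union_right
            rw [hM3def, mem_mis_iff]
            exact ⟨by rw [hfraglen]; omega, h2⟩
        · apply Finset.mem_union_left
          apply Finset.mem_union_left
          rw [hM1def, mem_mis_iff]
          exact ⟨by rw [length_qinf]; omega, h1⟩
      have hcard : (Finset.image (fun m => m * Q.length + e)
          (Finset.range (128 * k))).card = 128 * k := by
        rw [Finset.card_image_of_injective _ ?_, Finset.card_range]
        intro a b' hab
        simp only at hab
        have : a * Q.length = b' * Q.length := by omega
        exact Nat.eq_of_mul_eq_mul_right hq this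
      have hle : 128 * k ≤ (M1 ∪ M2 ∪ M3).card := by
        rw [← hcard]; exact Finset.card_le_card hsub
      have hb1 : M1.card ≤ 2 * k := hPper
      have hb3 : M3.card ≤ k := hxdist
      have hb2 : M2.card ≤ 6 * k := le_trans (Finset.card_image_le) hTper
      have := le_trans (Finset.card_union_le (M1 ∪ M2) M3)
        (Nat.add_le_add_right (Finset.card_union_le M1 M2) _)
      omega
  -- with hkey : P̄[i] = T̄[x+i]
  have hPbTb : ∀ i : ℕ, i < P.length →
      (qinf Q r P.length).getD i default = (qinf Q 0 T.length).getD (x + i) default := by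
    intro i hi
    rw [getD_qinf Q r P.length i hi, getD_qinf Q 0 T.length (x + i) (by omega),
        Nat.zero_add, hkey i]
  -- Step 2
  suffices hE : ∃ π ∈ mis P (qinf Q r P.length), ∃ τ' ∈ mis T (qinf Q 0 T.length),
      (x : ℤ) = (τ' : ℤ) - (π : ℤ) by
    obtain ⟨π, hπ, τ', hτ', hxe⟩ := hE
    exact ⟨(x : ℤ), ⟨π, hπ, τ', hτ', hxe⟩, rfl⟩
  by_contra hno
  push_neg at hno
  have habs : ∀ π ∈ mis P (qinf Q r P.length), (x + π) ∉ mis T (qinf Q 0 T.length) := by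
    intro π hπ hmemT
    exact hno π hπ (x + π) hmemT (by push_cast; ring)
  -- Claim 1 : Mis(P,P̄) ⊆ Mis(P,T[x..])
  have hM1sub : mis P (qinf Q r P.length) ⊆ mis P (frag T x P.length) := by
    intro π hπ
    have hπ' := mem_mis_iff.mp hπ
    rw [length_qinf] at hπ'
    have hπP : π < P.length := by omega
    have hTeq : T.getD (x + π) default = (qinf Q 0 T.length).getD (x + π) default := by
      by_contra hne2
      exact habs π hπ (mem_mis_iff.mpr ⟨by rw [length_qinf]; omega, hne2⟩)
    rw [mem_mis_iff]
    refine ⟨by rw [hfraglen]; omega, ?_⟩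
    rw [getD_frag T x P.length π hπP (by omega), hTeq, ← hPbTb π hπP]
    exact hπ'.2
  -- the τ-mismatches inside the window
  set J := Finset.Icc s (t - 1) with hJdef
  have hJb : ∀ j ∈ J, 0 ≤ j ∧ j < (b : ℤ) := by
    intro j hj
    rw [hJdef, Finset.mem_Icc] at hj
    omega
  have hxleτ : ∀ j ∈ J, (x : ℤ) ≤ τ j := by
    intro j hj
    have hj' := hj
    rw [hJdef, Finset.mem_Icc] at hj'
    rcases eq_or_lt_of_le hj'.1 with h | h
    · rw [← h]; exact hxs.2
    · exact le_trans hxs.2 (le_of_lt (hmono s j hs h (hJb j hj).2))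
  have hτlt : ∀ j ∈ J, τ j < (x : ℤ) + P.length := by
    intro j hj
    have hj' := hj
    rw [hJdef, Finset.mem_Icc] at hj'
    rcases eq_or_lt_of_le hj'.2 with h | h
    · rw [h]; exact hyt.1
    · refine lt_trans ?_ hyt.1
      exact hmono j (t - 1) (hJb j hj).1 h (by omega)
  set f : ℤ → ℕ := fun j => (τ j - x).toNat with hfdef
  have hfval : ∀ j ∈ J, ((f j : ℤ)) = τ j - x := by
    intro j hj
    rw [hfdef]
    exact Int.toNat_of_nonneg (by have := hxleτ j hj; omega)
  have hfinj : Set.InjOn f J := by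
    intro j1 h1 j2 h2 heq
    have e1 := hfval j1 h1
    have e2 := hfval j2 h2
    rw [heq] at e1
    have hττ : τ j1 = τ j2 := by omega
    by_contra hne2
    rcases lt_or_gt_of_ne hne2 with h | h
    · exact absurd hττ (ne_of_lt (hmono j1 j2 (hJb j1 h1).1 h (hJb j2 h2).2))
    · exact absurd hττ.symm (ne_of_lt (hmono j2 j1 (hJb j2 h2).1 h (hJb j1 h1).2))
  set S2 := J.image f with hS2def
  have hS2card : S2.card = (t - s).toNat := by
    rw [hS2def, Finset.card_image_of_injOn hfinj, hJdef, Int.card_Icc]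
    congr 1
    omega
  have hS2sub : S2 ⊆ mis P (frag T x P.length) \ mis P (qinf Q r P.length) := by
    intro i hi
    rw [hS2def, Finset.mem_image] at hi
    obtain ⟨j, hj, rfl⟩ := hi
    obtain ⟨m, hmT, hmτ⟩ := hmem j (hJb j hj).1 (hJb j hj).2
    have hfj := hfval j hj
    have hmx : m = x + f j := by omega
    have hiP : f j < P.length := by
      have := hτlt j hj
      omega
    have hiM1 : f j ∉ mis P (qinf Q r P.length) := by
      intro hin
      exact habs (f j) hin (by rw [← hmx]; exact hmT)
    have hPeq : P.getD (f j) default = (qinf Q r P.length).getD (f j) default := by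
      by_contra hne2
      exact hiM1 (mem_mis_iff.mpr ⟨by rw [length_qinf]; omega, hne2⟩)
    have hmT' := mem_mis_iff.mp hmT
    rw [Finset.mem_sdiff, mem_mis_iff]
    refine ⟨⟨by rw [hfraglen]; omega, ?_⟩, hiM1⟩
    rw [getD_frag T x P.length (f j) hiP (by omega), hPeq, hPbTb (f j) hiP, ← hmx]
    exact fun hcontra => hmT'.2 hcontra.symm
  -- final counting
  have hdisj : Disjoint (mis P (qinf Q r P.length)) S2 := by
    rw [Finset.disjoint_right]
    intro a ha
    exact ((Finset.mem_sdiff.mp (hS2sub ha)).2)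
  have hUsub : mis P (qinf Q r P.length) ∪ S2 ⊆ mis P (frag T x P.length) := by
    intro a ha
    rcases Finset.mem_union.mp ha with h | h
    · exact hM1sub h
    · exact (Finset.mem_sdiff.mp (hS2sub h)).1
  have hcardU := Finset.card_le_card hUsub
  rw [Finset.card_union_of_disjoint hdisj, hS2card] at hcardU
  have hfin : (mis P (qinf Q r P.length)).card + (t - s).toNat ≤ k := le_trans hcardU hxdist
  have : hdist P (qinf Q r P.length) = (mis P (qinf Q r P.length)).card := rfl
  omega
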